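/- Let (X,·,:) be a regular q-cycle set such that the permutation group G(X) generated by all σ_x and δ_x is finite. Then the squaring maps q(x) = x·x and q'(x) = x:x are surjective. -/

import Mathlib

private lemma pow_mem_set' {X : Type*} (f : Equiv.Perm X) (S : Set X)
    (h : ∀ s ∈ S, f s ∈ S) : ∀ k, ∀ s ∈ S, (f ^ k) s ∈ S := by
  intro k
  induction k with
  | zero => simpa using fun s hs => hs
  | succ n ih =>
    intro s hs
    rw [pow_succ]
    simpa [Equiv.Perm.mul_apply] using ih (f s) (h s hs)

private lemma inv_mem_set' {X : Type*} (f : Equiv.Perm X) (hf : IsOfFinOrder f) (S : Set X)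
    (h : ∀ s ∈ S, f s ∈ S) : ∀ s ∈ S, f⁻¹ s ∈ S := by
  obtain ⟨n, hn, hfn⟩ := isOfFinOrder_iff_pow_eq_one.mp hf
  intro s hs
  have hinv : f⁻¹ = f ^ (n - 1) := by
    have hmul : f * f ^ (n - 1) = 1 := by
      rw [← pow_succ', Nat.sub_add_cancel hn]
      exact hfn
    exact inv_eq_of_mul_eq_one_right hmul
  rw [hinv]
  exact pow_mem_set' f S h (n - 1) s hs

theorem stmt_3 {X : Type*} (d c : X → X → X)
    (σ δ : X → Equiv.Perm X)
    (hσ : ∀ x y, σ x y = d x y)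
    (hδ : ∀ x y, δ x y = c x y)
    (h1 : ∀ x y z, d (d x y) (d x z) = d (c y x) (d y z))
    (h2 : ∀ x y z, c (c x y) (c x z) = c (d y x) (c y z))
    (h3 : ∀ x y z, c (d x y) (d x z) = d (c y x) (c y z))
    (hfin : Finite (Subgroup.closure (Set.range σ ∪ Set.range δ) : Subgroup (Equiv.Perm X))) :
    Function.Surjective (fun x => d x x) ∧ Function.Surjective (fun x => c x x) := by
  -- every generator has finite order
  have hord : ∀ f ∈ Set.range σ ∪ Set.range δ, IsOfFinOrder f := by
    intro f hf
    have hf' : f ∈ Subgroup.closure (Set.range σ ∪ Set.range δ) := Subgroup.subset_closure hf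
    have h := isOfFinOrder_of_finite
      (⟨f, hf'⟩ : (Subgroup.closure (Set.range σ ∪ Set.range δ) : Subgroup (Equiv.Perm X)))
    obtain ⟨n, hn, he⟩ := isOfFinOrder_iff_pow_eq_one.mp h
    refine isOfFinOrder_iff_pow_eq_one.mpr ⟨n, hn, ?_⟩
    have := congrArg (fun g : (Subgroup.closure (Set.range σ ∪ Set.range δ) : Subgroup (Equiv.Perm X)) => (g : Equiv.Perm X)) he
    simpa using this
  -- Im q is closed under every σ w
  have hSclosed : ∀ w, ∀ s ∈ Set.range (fun x => d x x), σ w s ∈ Set.range (fun x => d x x) := by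
    rintro w _ ⟨y, rfl⟩
    refine ⟨d ((δ y).symm w) y, ?_⟩
    simp only []
    rw [h1 ((δ y).symm w) y y, hσ, ← hδ, Equiv.apply_symm_apply]
  -- Im q' is closed under every δ w
  have hS'closed : ∀ w, ∀ s ∈ Set.range (fun x => c x x), δ w s ∈ Set.range (fun x => c x x) := by
    rintro w _ ⟨y, rfl⟩
    refine ⟨c ((σ y).symm w) y, ?_⟩
    simp only []
    rw [h2 ((σ y).symm w) y y, hδ, ← hσ, Equiv.apply_symm_apply]
  constructor
  · intro y
    have hy : d y y ∈ Set.range (fun x => d x x) := ⟨y, rfl⟩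
    have hf := hord (σ y) (Or.inl ⟨y, rfl⟩)
    have hmem := inv_mem_set' (σ y) hf _ (fun s hs => hSclosed y s hs) _ hy
    obtain ⟨a, ha⟩ := hmem
    refine ⟨a, ?_⟩
    simp only [] at ha ⊢
    rw [ha, ← hσ, Equiv.Perm.inv_def, Equiv.symm_apply_apply]
  · intro y
    have hy : c y y ∈ Set.range (fun x => c x x) := ⟨y, rfl⟩
    have hf := hord (δ y) (Or.inr ⟨y, rfl⟩)
    have hmem := inv_mem_set' (δ y) hf _ (fun s hs => hS'closed y s hs) _ hy
    obtain ⟨a, ha⟩ := hmem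
    refine ⟨a, ?_⟩
    simp only [] at ha ⊢
    rw [ha, ← hδ, Equiv.Perm.inv_def, Equiv.symm_apply_apply]
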